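/- Assume the complement ℕ \ N is nonempty (i.e. the numerical-semigroup algebra K[N] is a 1-dimensional toric algebra which is not normal). Then the ring R (the associated graded ring of the ring of differential operators of K[N]) is not Cohen–Macaulay. -/

import Mathlib

open Classical
set_option maxHeartbeats 1000000
set_option synthInstance.maxHeartbeats 400000


/-!
Setting: `K` an algebraically closed field of characteristic 0, `N` an additive
submonoid of `ℕ` with finite complement, `Ω(w) = {b ∈ N : b + w ∉ N}` (computed in `ℤ`),
and `R ⊆ K[t,ξ]` the `K`-subalgebra generated by `t·ξ` and the monomials
`t^{#Ω(w)}·ξ^{#Ω(−w)}`, `w ∈ ℤ`. By Saito–Traves, `R = gr D(K[N];K)`.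
Here `t = X 0` and `ξ = X 1` in `MvPolynomial (Fin 2) K`.
-/

/-- `Ω(w) = {b ∈ N : b + w ∉ N}`, the sum `b + w` computed in `ℤ`. -/
def Om (N : AddSubmonoid ℕ) (w : ℤ) : Set ℕ :=
  {b : ℕ | b ∈ N ∧ ∀ c ∈ N, (c : ℤ) ≠ (b : ℤ) + w}

/-- The associated graded ring `gr D(K[N];K)` in its Saito–Traves description: the
`K`-subalgebra of `K[t,ξ]` generated by `t·ξ` and `t^{#Ω(w)}·ξ^{#Ω(−w)}`, `w ∈ ℤ`. -/
noncomputable def grR (K : Type) [Field K] (N : AddSubmonoid ℕ) :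
    Subalgebra K (MvPolynomial (Fin 2) K) :=
  Algebra.adjoin K
    ({MvPolynomial.X 0 * MvPolynomial.X 1} ∪
      {p | ∃ w : ℤ,
        p = MvPolynomial.X 0 ^ (Om N w).ncard * MvPolynomial.X 1 ^ (Om N (-w)).ncard})

/-- A list `rs` of elements of a commutative ring `R` with `∀ x ∈ rs, x ∈ I` gives a
length; the depth of `I` on `R` is the supremum of lengths of regular sequences
(in the sense of `RingTheory.Sequence.IsRegular`) contained in `I`. -/
noncomputable def depthIn (R : Type) [CommRing R] (I : Ideal R) : ℕ∞ :=
  sSup {m : ℕ∞ | ∃ rs : List R, (∀ x ∈ rs, x ∈ I) ∧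
    RingTheory.Sequence.IsRegular R rs ∧ (rs.length : ℕ∞) = m}

/-- A commutative ring is Cohen–Macaulay if for every maximal ideal `P`, the depth of
the localization at `P` (on its maximal ideal) equals its Krull dimension. -/
def IsCohenMacaulayRing (R : Type) [CommRing R] : Prop :=
  ∀ P : Ideal R, ∀ hP : P.IsMaximal,
    haveI : P.IsPrime := hP.isPrime
    ((depthIn (Localization.AtPrime P)
        (IsLocalRing.maximalIdeal (Localization.AtPrime P)) : ℕ∞) : WithBot ℕ∞)
      = ringKrullDim (Localization.AtPrime P)


section Comb
variable {N : AddSubmonoid ℕ} {F : ℕ}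
variable (hF : F ∉ N) (hgt : ∀ k : ℕ, F < k → k ∈ N) (h1 : (1:ℕ) ∉ N)

lemma mem_Om {b : ℕ} {w : ℤ} : b ∈ Om N w ↔ b ∈ N ∧ ¬ ∃ c ∈ N, (c:ℤ) = (b:ℤ) + w := by
  simp [Om]

include hgt in
lemma om_int_bound {b : ℕ} {w : ℤ} (hb : b ∈ Om N w) : (b:ℤ) + w ≤ F := by
  by_contra h
  push_neg at h
  obtain ⟨hbN, hc⟩ := hb
  have h0 : (0:ℤ) ≤ (b:ℤ) + w := le_trans (by positivity) h.le
  obtain ⟨k, hk⟩ := Int.eq_ofNat_of_zero_le h0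
  have hkN : k ∈ N := hgt k (by exact_mod_cast hk ▸ h)
  exact hc k hkN hk.symm

include hgt in
lemma om_subset_Iic (w : ℤ) : Om N w ⊆ Set.Iic (F + w.natAbs) := by
  intro b hb
  have := om_int_bound hgt hb
  have : (b:ℤ) ≤ F + w.natAbs := by omega
  exact_mod_cast this

include hgt in
lemma om_finite (w : ℤ) : (Om N w).Finite :=
  (Set.finite_Iic _).subset (om_subset_Iic hgt w)

lemma om_zero : Om N 0 = ∅ := by
  ext b
  simp only [mem_Om, Set.mem_empty_iff_false, iff_false, not_and, not_not]
  exact fun hb => ⟨b, hb, by simp⟩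

include hF hgt in
lemma om_F : Om N (F:ℤ) = {0} := by
  ext b
  simp only [mem_Om, Set.mem_singleton_iff]
  constructor
  · rintro ⟨hbN, hc⟩
    by_contra hb0
    have hb1 : 1 ≤ b := Nat.one_le_iff_ne_zero.mpr hb0
    exact hc ⟨b + F, hgt (b+F) (by omega), by push_cast; ring⟩
  · rintro rfl
    refine ⟨N.zero_mem, ?_⟩
    rintro ⟨c, hcN, hceq⟩
    have : c = F := by omega
    exact hF (this ▸ hcN)

include hgt in
lemma om_gt {w : ℤ} (hw : (F:ℤ) < w) : Om N w = ∅ := by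
  ext b
  simp only [mem_Om, Set.mem_empty_iff_false, iff_false, not_and, not_not]
  intro hbN
  have h0 : (0:ℤ) ≤ (b:ℤ) + w := by omega
  obtain ⟨k, hk⟩ := Int.eq_ofNat_of_zero_le h0
  exact ⟨k, hgt k (by omega), hk.symm⟩

end Comb


section X
variable {N : AddSubmonoid ℕ} {F : ℕ}
variable (hF : F ∉ N) (hgt : ∀ k : ℕ, F < k → k ∈ N)

include hgt in
lemma count_identity (w : ℕ) :
    ((Finset.range (F+w+2)).filter (fun b => b ∈ N ∧ ¬ ∃ c ∈ N, c + w = b)).card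
      = ((Finset.range (F+2)).filter (fun b => b ∈ N ∧ (b + w) ∉ N)).card + w := by
  classical
  set X := F + w + 2 with hX
  set A := (Finset.range X).filter (fun b => b ∈ N) with hA
  set A' := (Finset.range (F+2)).filter (fun b => b ∈ N) with hA'
  have lhs_eq : (Finset.range X).filter (fun b => b ∈ N ∧ ¬ ∃ c ∈ N, c + w = b)
      = A.filter (fun b => ¬ ∃ c ∈ N, c + w = b) := by
    rw [hA, Finset.filter_filter]
  have rhs_eq : (Finset.range (F+2)).filter (fun b => b ∈ N ∧ (b + w) ∉ N)
      = A'.filter (fun b => (b + w) ∉ N) := by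
    rw [hA', Finset.filter_filter]
  have sA : (A.filter (fun b => ∃ c ∈ N, c + w = b)).card
      + (A.filter (fun b => ¬ ∃ c ∈ N, c + w = b)).card = A.card :=
    Finset.card_filter_add_card_filter_not _
  have sA' : (A'.filter (fun b => (b + w) ∈ N)).card
      + (A'.filter (fun b => (b + w) ∉ N)).card = A'.card :=
    Finset.card_filter_add_card_filter_not _
  have im : A.filter (fun b => ∃ c ∈ N, c + w = b)
      = (A'.filter (fun b => (b + w) ∈ N)).image (· + w) := by
    ext b
    simp only [hA, hA', Finset.mem_image, Finset.mem_filter, Finset.mem_range]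
    constructor
    · rintro ⟨⟨hbX, hbN⟩, c, hcN, rfl⟩
      exact ⟨c, ⟨⟨by omega, hcN⟩, hbN⟩, rfl⟩
    · rintro ⟨c, ⟨⟨hcF, hcN⟩, hcwN⟩, rfl⟩
      exact ⟨⟨by omega, hcwN⟩, c, hcN, rfl⟩
  have imcard : (A.filter (fun b => ∃ c ∈ N, c + w = b)).card
      = (A'.filter (fun b => (b + w) ∈ N)).card := by
    rw [im]
    exact Finset.card_image_of_injective _ (add_left_injective w)
  have cardA : A.card = A'.card + w := by
    have hsplit : Finset.range X = Finset.range (F+2) ∪ Finset.Ico (F+2) X := by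
      rw [Finset.range_eq_Ico, Finset.range_eq_Ico]
      exact (Finset.Ico_union_Ico_eq_Ico (a := 0) (b := F+2) (c := X) (by omega) (by omega)).symm
    rw [hA, hA', hsplit, Finset.filter_union]
    have hful : (Finset.Ico (F+2) X).filter (fun b => b ∈ N) = Finset.Ico (F+2) X := by
      apply Finset.filter_true_of_mem
      intro b hb
      simp only [Finset.mem_Ico] at hb
      exact hgt b (by omega)
    rw [hful]
    rw [Finset.card_union_of_disjoint]
    · rw [Nat.card_Ico]
      omega
    · apply Finset.disjoint_left.mpr
      intro b hb hb2
      simp only [Finset.mem_filter, Finset.mem_range] at hb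
      simp only [Finset.mem_Ico] at hb2
      omega
  have hsub := Finset.card_filter_le A' (fun b => (b + w) ∈ N)
  rw [lhs_eq, rhs_eq]
  omega
end X

-- separate hypotheses block
section Y
variable {N : AddSubmonoid ℕ} {F : ℕ}
variable (hF : F ∉ N) (hgt : ∀ k : ℕ, F < k → k ∈ N)


include hgt in
lemma om_nat_coe (w : ℕ) :
    Om N (w:ℤ) = ↑((Finset.range (F+2)).filter (fun b => b ∈ N ∧ (b + w) ∉ N)) := by
  ext b
  simp only [Om, Set.mem_setOf_eq, Finset.coe_filter, Finset.mem_range, Set.mem_setOf_eq,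
    Finset.mem_coe]
  constructor
  · rintro ⟨hbN, hc⟩
    have hbw : b + w ∉ N := fun h => hc _ h (by push_cast; ring)
    have hble : b + w ≤ F := by
      by_contra hgtb
      exact hbw (hgt _ (by omega))
    exact ⟨by omega, hbN, hbw⟩
  · rintro ⟨hb2, hbN, hbw⟩
    refine ⟨hbN, fun c hcN hceq => ?_⟩
    have : c = b + w := by omega
    exact hbw (this ▸ hcN)

include hgt in
lemma om_neg_coe (w : ℕ) :
    Om N (-(w:ℤ)) = ↑((Finset.range (F+w+2)).filter (fun b => b ∈ N ∧ ¬ ∃ c ∈ N, c + w = b)) := by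
  ext b
  simp only [Om, Set.mem_setOf_eq, Finset.coe_filter, Finset.mem_range, Set.mem_setOf_eq,
    Finset.mem_coe]
  constructor
  · rintro ⟨hbN, hc⟩
    have hne : ¬ ∃ c ∈ N, c + w = b := by
      rintro ⟨c, hcN, rfl⟩
      exact hc c hcN (by push_cast; ring)
    have hble : b ≤ F + w := by
      by_contra hgtb
      exact hne ⟨b - w, hgt _ (by omega), by omega⟩
    exact ⟨by omega, hbN, hne⟩
  · rintro ⟨hb2, hbN, hne⟩
    refine ⟨hbN, fun c hcN hceq => ?_⟩
    exact hne ⟨c, hcN, by omega⟩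

include hgt in
lemma identity_nat (w : ℕ) : (Om N (-(w:ℤ))).ncard = (Om N (w:ℤ)).ncard + w := by
  rw [om_nat_coe hgt w, om_neg_coe hgt w, Set.ncard_coe_finset, Set.ncard_coe_finset]
  exact count_identity hgt w

include hgt in
lemma identityZ (w : ℤ) : ((Om N (-w)).ncard : ℤ) = (Om N w).ncard + w := by
  rcases le_or_gt 0 w with h | h
  · obtain ⟨n, rfl⟩ := Int.eq_ofNat_of_zero_le h
    have := identity_nat (N := N) hgt n
    push_cast [this]
    ring
  · obtain ⟨n, rfl⟩ : ∃ n : ℕ, w = -(n:ℤ) := ⟨w.natAbs, by omega⟩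
    have := identity_nat (N := N) hgt n
    rw [neg_neg]
    push_cast [this]
    ring
end Y

section Z
variable {N : AddSubmonoid ℕ} {F : ℕ}
variable (hF : F ∉ N) (hgt : ∀ k : ℕ, F < k → k ∈ N) (hone : (1:ℕ) ∉ N)

include hgt in
lemma aC_le {v : ℤ} (hv : 1 ≤ v) : (Om N v).ncard ≤ F := by
  have hsub : Om N v ⊆ ↑(Finset.range F) := by
    intro b hb
    have := om_int_bound hgt hb
    simp only [Finset.coe_range, Set.mem_Iio]
    omega
  calc (Om N v).ncard ≤ (↑(Finset.range F) : Set ℕ).ncard :=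
        Set.ncard_le_ncard hsub (Finset.range F).finite_toSet
    _ = F := by rw [Set.ncard_coe_finset, Finset.card_range]

include hgt hone in
lemma L1 {w : ℤ} (hw : w ≠ 0) : (Om N (w + F)).ncard ≤ (Om N w).ncard := by
  rcases le_or_gt 1 w with h | h
  · rw [om_gt hgt (by omega)]
    simp
  · -- w ≤ -1 (since w ≠ 0 and w < 1)
    obtain ⟨n, hn1, rfl⟩ : ∃ n : ℕ, 1 ≤ n ∧ w = -(n:ℤ) := ⟨w.natAbs, by omega, by omega⟩
    have key : ((Om N (-(n:ℤ))).ncard : ℤ) = (Om N (n:ℤ)).ncard + n := identityZ hgt n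
    rcases lt_trichotomy (n : ℤ) (F : ℤ) with hnF | hnF | hnF
    · -- 1 ≤ n < F : Om N (F - n) ⊆ (Iic n).erase 1
      have hsub : Om N (-(n:ℤ) + F) ⊆ ↑((Finset.Iic n).erase 1) := by
        intro b hb
        have hbd := om_int_bound hgt hb
        have hbN := hb.1
        simp only [Finset.coe_erase, Finset.coe_Iic, Set.mem_diff, Set.mem_Iic,
          Set.mem_singleton_iff]
        refine ⟨by omega, fun hb1 => hone (hb1 ▸ hbN)⟩
      have hcard : ((Finset.Iic n).erase 1).card = n := by
        rw [Finset.card_erase_of_mem (by simp [hn1]), Nat.card_Iic]; omega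
      have : (Om N (-(n:ℤ) + F)).ncard ≤ n := by
        calc (Om N (-(n:ℤ) + F)).ncard ≤ (↑((Finset.Iic n).erase 1) : Set ℕ).ncard :=
              Set.ncard_le_ncard hsub (Finset.finite_toSet _)
          _ = n := by rw [Set.ncard_coe_finset, hcard]
      omega
    · -- n = F
      have : -(n:ℤ) + F = 0 := by omega
      rw [this, om_zero]
      simp
    · -- n > F
      have heq : -(n:ℤ) + F = -((n:ℤ) - F) := by ring
      have key2 : ((Om N (-((n:ℤ) - F))).ncard : ℤ) = (Om N ((n:ℤ) - F)).ncard + ((n:ℤ) - F) :=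
        identityZ hgt ((n:ℤ) - F)
      have hb2 : (Om N ((n:ℤ) - F)).ncard ≤ F := aC_le hgt (by omega)
      rw [heq]
      omega
end Z

section MonAlg
open MvPolynomial
variable (K : Type) [Field K] (N : AddSubmonoid ℕ)

/-- exponent of the generator attached to `w` -/
noncomputable def dgen (w : ℤ) : Fin 2 →₀ ℕ :=
  Finsupp.single 0 (Om N w).ncard + Finsupp.single 1 (Om N (-w)).ncard

noncomputable def e11 : Fin 2 →₀ ℕ := Finsupp.single 0 1 + Finsupp.single 1 1

noncomputable def Mset : AddSubmonoid (Fin 2 →₀ ℕ) :=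
  AddSubmonoid.closure ({e11} ∪ Set.range (dgen N))

lemma Xpow_mul_Xpow (p q : ℕ) :
    (X 0 : MvPolynomial (Fin 2) K) ^ p * X 1 ^ q
      = monomial (Finsupp.single 0 p + Finsupp.single 1 q) 1 := by
  rw [X_pow_eq_monomial, X_pow_eq_monomial, monomial_mul, mul_one]

/-- the subalgebra of polynomials supported on `Mset` -/
noncomputable def goodSupp : Subalgebra K (MvPolynomial (Fin 2) K) where
  carrier := {f | ∀ d ∈ f.support, d ∈ Mset N}
  mul_mem' := by
    classical
    intro f g hf hg d hd
    have := MvPolynomial.support_mul f g hd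
    rw [Finset.mem_add] at this
    obtain ⟨d1, hd1, d2, hd2, rfl⟩ := this
    exact add_mem (hf d1 hd1) (hg d2 hd2)
  add_mem' := by
    intro f g hf hg d hd
    have := MvPolynomial.support_add hd
    rw [Finset.mem_union] at this
    rcases this with h | h
    · exact hf d h
    · exact hg d h
  algebraMap_mem' := by
    intro c d hd
    have : d ∈ (MvPolynomial.C (σ := Fin 2) c).support := hd
    rw [MvPolynomial.C_apply, MvPolynomial.support_monomial] at this
    by_cases hc : c = 0
    · simp [hc] at this
    · rw [if_neg hc] at this
      simp only [Finset.mem_singleton] at this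
      subst this
      exact zero_mem _

lemma grR_le_goodSupp : grR K N ≤ goodSupp K N := by
  rw [grR]
  apply Algebra.adjoin_le
  rintro f (hf | ⟨w, rfl⟩)
  · rw [Set.mem_singleton_iff] at hf
    subst hf
    intro d hd
    have : (X 0 : MvPolynomial (Fin 2) K) * X 1 = monomial (e11) 1 := by
      rw [e11, ← Xpow_mul_Xpow, pow_one, pow_one]
    rw [this, support_monomial, if_neg one_ne_zero] at hd
    simp only [Finset.mem_singleton] at hd
    subst hd
    exact AddSubmonoid.subset_closure (Or.inl rfl)
  · intro d hd
    rw [Xpow_mul_Xpow, support_monomial, if_neg one_ne_zero] at hd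
    simp only [Finset.mem_singleton] at hd
    subst hd
    exact AddSubmonoid.subset_closure (Or.inr ⟨w, rfl⟩)

lemma monomial_mem_grR {d : Fin 2 →₀ ℕ} (hd : d ∈ Mset N) :
    monomial d (1 : K) ∈ grR K N := by
  induction hd using AddSubmonoid.closure_induction with
  | mem x hx =>
    rcases hx with hx | ⟨w, rfl⟩
    · rw [Set.mem_singleton_iff] at hx
      subst hx
      rw [e11, ← Xpow_mul_Xpow, pow_one, pow_one]
      exact Algebra.subset_adjoin (Or.inl rfl)
    · rw [dgen, ← Xpow_mul_Xpow]
      exact Algebra.subset_adjoin (Or.inr ⟨w, rfl⟩)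
  | zero => rw [monomial_zero', MvPolynomial.C_1]; exact one_mem _
  | add x y hx hy ihx ihy =>
    have : monomial (x + y) (1 : K) = monomial x 1 * monomial y 1 := by
      rw [monomial_mul, one_mul]
    rw [this]
    exact mul_mem ihx ihy

end MonAlg

section MsetFacts
open MvPolynomial
variable {N : AddSubmonoid ℕ} {F : ℕ}
variable (hF : F ∉ N) (hgt : ∀ k : ℕ, F < k → k ∈ N) (hone : (1:ℕ) ∉ N)

include hF hgt in
lemma aC_F : (Om N (F:ℤ)).ncard = 1 := by
  rw [om_F hF hgt, Set.ncard_singleton]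

include hF hgt in
lemma aC_negF : (Om N (-(F:ℤ))).ncard = F + 1 := by
  have := identityZ (N := N) hgt (F:ℤ)
  rw [aC_F hF hgt] at this
  omega

include hgt in
lemma aC_Fp1 : (Om N ((F:ℤ)+1)).ncard = 0 := by
  rw [om_gt hgt (by omega)]
  simp

include hgt in
lemma aC_negFp1 : (Om N (-((F:ℤ)+1))).ncard = F + 1 := by
  have := identityZ (N := N) hgt ((F:ℤ)+1)
  rw [aC_Fp1 hgt] at this
  omega

lemma dgen_zero : dgen N 0 = 0 := by
  rw [dgen, neg_zero, om_zero]
  simp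

include hF hgt in
lemma dgen_F : dgen N (F:ℤ) = Finsupp.single 0 1 + Finsupp.single 1 (F+1) := by
  rw [dgen, aC_F hF hgt, aC_negF hF hgt]

include hF hgt hone in
lemma Mset_add_F {d : Fin 2 →₀ ℕ} (hd : d ∈ Mset N) (hd0 : d ≠ 0) :
    d + Finsupp.single 1 F ∈ Mset N := by
  induction hd using AddSubmonoid.closure_induction with
  | mem x hx =>
    rcases hx with hx | ⟨w, rfl⟩
    · rw [Set.mem_singleton_iff] at hx
      subst hx
      have : e11 + Finsupp.single 1 F = dgen N (F:ℤ) := by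
        rw [dgen_F hF hgt, e11]
        have h1F : 1 + F = F + 1 := by omega
        rw [add_assoc, ← Finsupp.single_add, h1F]
      rw [this]
      exact AddSubmonoid.subset_closure (Or.inr ⟨(F:ℤ), rfl⟩)
    · -- generator dgen w, w ≠ 0 since dgen w ≠ 0
      have hw : w ≠ 0 := by
        rintro rfl
        exact hd0 dgen_zero
      have hle : (Om N (w + F)).ncard ≤ (Om N w).ncard := L1 hgt hone hw
      have idw : ((Om N (-w)).ncard : ℤ) = (Om N w).ncard + w := identityZ hgt w
      have idwF : ((Om N (-(w + F))).ncard : ℤ) = (Om N (w + F)).ncard + (w + F) :=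
        identityZ hgt (w + F)
      set A1 := (Om N w).ncard with hA1
      set A2 := (Om N (-w)).ncard with hA2
      set B1 := (Om N (w + (F:ℤ))).ncard with hB1
      set B2 := (Om N (-(w + (F:ℤ)))).ncard with hB2
      set k := A1 - B1 with hk
      have key : dgen N w + Finsupp.single 1 F = dgen N (w + F) + k • e11 := by
        rw [dgen, dgen, e11, smul_add, Finsupp.smul_single, Finsupp.smul_single]
        rw [← hA1, ← hA2, ← hB1, ← hB2]
        ext i
        fin_cases i <;>
          simp [Finsupp.single_apply] <;> omega
      rw [key]
      apply add_mem
      · apply AddSubmonoid.subset_closure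
        exact Or.inr ⟨w + F, rfl⟩
      · apply nsmul_mem
        apply AddSubmonoid.subset_closure
        exact Or.inl rfl
  | zero => exact absurd rfl hd0
  | add x y hx hy ihx ihy =>
    by_cases hx0 : x = 0
    · subst hx0
      rw [zero_add] at hd0 ⊢
      exact ihy hd0
    · have h' : x + y + Finsupp.single 1 F = x + Finsupp.single 1 F + y :=
        add_right_comm x y _
      rw [h']
      exact add_mem (ihx hx0) hy

end MsetFacts

section MsetFacts2
open MvPolynomial
variable {N : AddSubmonoid ℕ} {F : ℕ}
variable (hF : F ∉ N) (hgt : ∀ k : ℕ, F < k → k ∈ N)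

include hF hgt in
lemma single1F_not_mem : Finsupp.single 1 F ∉ Mset N := by
  intro hmem
  -- every element of Mset with vanishing 0-component shifts N into itself
  have key : ∀ d ∈ Mset N, d 0 = 0 → ∀ n ∈ N, n + d 1 ∈ N := by
    intro d hd
    induction hd using AddSubmonoid.closure_induction with
    | mem x hx =>
      rcases hx with hx | ⟨w, rfl⟩
      · rw [Set.mem_singleton_iff] at hx
        subst hx
        intro h0
        exfalso
        rw [e11] at h0
        simp [Finsupp.single_apply] at h0
      · intro h0 n hn
        rw [dgen] at h0
        simp only [Finsupp.add_apply, Finsupp.single_apply] at h0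
        norm_num at h0
        -- h0 : (Om N w).ncard = 0
        have hOme : Om N w = ∅ := (Set.ncard_eq_zero (om_finite hgt w)).mp h0
        have hex : ∀ b ∈ N, ∃ c ∈ N, (c:ℤ) = (b:ℤ) + w := by
          intro b hb
          by_contra hcon
          push_neg at hcon
          have : b ∈ Om N w := ⟨hb, fun c hc => hcon c hc⟩
          rw [hOme] at this
          exact this
        have idw : ((Om N (-w)).ncard : ℤ) = (Om N w).ncard + w := identityZ hgt w
        rw [h0] at idw
        push_cast at idw
        -- idw : (Om N (-w)).ncard = w
        obtain ⟨c, hcN, hceq⟩ := hex n hn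
        have : (dgen N w) 1 = (Om N (-w)).ncard := by
          rw [dgen]
          simp [Finsupp.single_apply]
        rw [this]
        have : c = n + (Om N (-w)).ncard := by omega
        exact this ▸ hcN
    | zero => intro _ n hn; simpa using hn
    | add x y hx hy ihx ihy =>
      intro h0 n hn
      simp only [Finsupp.add_apply] at h0 ⊢
      have hx0 : x 0 = 0 := by omega
      have hy0 : y 0 = 0 := by omega
      rw [← add_assoc]
      exact ihy hy0 _ (ihx hx0 n hn)
  have h0 : (Finsupp.single 1 F : Fin 2 →₀ ℕ) 0 = 0 := by
    simp [Finsupp.single_apply]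
  have := key _ hmem h0 0 N.zero_mem
  simp only [Finsupp.single_apply] at this
  norm_num at this
  exact hF this

end MsetFacts2

section GrFacts
open MvPolynomial
variable (K : Type) [Field K] {N : AddSubmonoid ℕ} {F : ℕ}
variable (hF : F ∉ N) (hgt : ∀ k : ℕ, F < k → k ∈ N) (hone : (1:ℕ) ∉ N)

lemma support_subset_Mset {f : MvPolynomial (Fin 2) K} (hf : f ∈ grR K N) :
    ∀ d ∈ f.support, d ∈ Mset N := grR_le_goodSupp K N hf

include hF hgt in
lemma coeff_single1F_zero {f : MvPolynomial (Fin 2) K} (hf : f ∈ grR K N) :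
    coeff (Finsupp.single 1 F) f = 0 := by
  by_contra h
  exact single1F_not_mem hF hgt
    (support_subset_Mset K hf _ (MvPolynomial.mem_support_iff.mpr h))

include hF hgt hone in
lemma mul_X1F_mem {f : MvPolynomial (Fin 2) K} (hf : f ∈ grR K N)
    (h0 : coeff 0 f = 0) : f * (X 1) ^ F ∈ grR K N := by
  have hrw : f * (X 1) ^ F
      = ∑ d ∈ f.support, monomial (d + Finsupp.single 1 F) (coeff d f) := by
    conv_lhs => rw [f.as_sum]
    rw [Finset.sum_mul]
    refine Finset.sum_congr rfl fun d hd => ?_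
    rw [X_pow_eq_monomial, monomial_mul, mul_one]
  rw [hrw]
  apply Subalgebra.sum_mem
  intro d hd
  have hdM : d ∈ Mset N := support_subset_Mset K hf d hd
  have hd0 : d ≠ 0 := by
    rintro rfl
    exact (MvPolynomial.mem_support_iff.mp hd) h0
  have hmem : d + Finsupp.single 1 F ∈ Mset N := Mset_add_F hF hgt hone hdM hd0
  have : monomial (d + Finsupp.single 1 F) (coeff d f)
      = MvPolynomial.C (coeff d f) * monomial (d + Finsupp.single 1 F) 1 := by
    rw [MvPolynomial.C_mul_monomial, mul_one]
  rw [this]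
  exact mul_mem (Subalgebra.algebraMap_mem _ _) (monomial_mem_grR K N hmem)

lemma u_mem : (X 0 : MvPolynomial (Fin 2) K) * X 1 ∈ grR K N :=
  Algebra.subset_adjoin (Or.inl rfl)

include hF hgt in
lemma z_mem : (X 0 : MvPolynomial (Fin 2) K) * (X 1) ^ (F + 1) ∈ grR K N := by
  have : (X 0 : MvPolynomial (Fin 2) K) * (X 1) ^ (F + 1)
      = X 0 ^ (Om N (F:ℤ)).ncard * X 1 ^ (Om N (-(F:ℤ))).ncard := by
    rw [aC_F hF hgt, aC_negF hF hgt, pow_one]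
  rw [this]
  exact Algebra.subset_adjoin (Or.inr ⟨(F:ℤ), rfl⟩)

include hgt in
lemma tpow_mem : (X 0 : MvPolynomial (Fin 2) K) ^ (F + 1) ∈ grR K N := by
  have : (X 0 : MvPolynomial (Fin 2) K) ^ (F + 1)
      = X 0 ^ (Om N (-((F:ℤ)+1))).ncard * X 1 ^ (Om N (-(-((F:ℤ)+1)))).ncard := by
    rw [neg_neg, aC_Fp1 hgt, aC_negFp1 hgt, pow_zero, mul_one]
  rw [this]
  exact Algebra.subset_adjoin (Or.inr ⟨-((F:ℤ)+1), rfl⟩)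

end GrFacts

section RingLayer
open MvPolynomial
variable {K : Type} [Field K] {N : AddSubmonoid ℕ} {F : ℕ}
variable (hF : F ∉ N) (hgt : ∀ k : ℕ, F < k → k ∈ N) (hone : (1:ℕ) ∉ N)

/-- evaluation of the constant coefficient on `grR` -/
noncomputable def muHom (K : Type) [Field K] (N : AddSubmonoid ℕ) : ↥(grR K N) →+* K :=
  (MvPolynomial.constantCoeff).comp ((grR K N).val.toRingHom)

lemma muHom_apply (f : ↥(grR K N)) : muHom K N f = MvPolynomial.constantCoeff (f : MvPolynomial (Fin 2) K) := rfl

lemma muHom_surjective : Function.Surjective (muHom K N) := by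
  intro c
  refine ⟨⟨MvPolynomial.C c, Subalgebra.algebraMap_mem _ c⟩, ?_⟩
  rw [muHom_apply]
  simp

/-- the irrelevant maximal ideal of `grR` -/
noncomputable def mIdeal (K : Type) [Field K] (N : AddSubmonoid ℕ) : Ideal ↥(grR K N) :=
  RingHom.ker (muHom K N)

lemma mIdeal_isMaximal : (mIdeal K N).IsMaximal :=
  RingHom.ker_isMaximal_of_surjective _ (muHom_surjective)

lemma mem_mIdeal_iff {f : ↥(grR K N)} :
    f ∈ mIdeal K N ↔ MvPolynomial.constantCoeff (f : MvPolynomial (Fin 2) K) = 0 :=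
  RingHom.mem_ker

/-- the map to `K[t]` killing `ξ` -/
noncomputable def psiHom (K : Type) [Field K] : MvPolynomial (Fin 2) K →ₐ[K] Polynomial K :=
  MvPolynomial.aeval ![Polynomial.X, 0]

noncomputable def pIdeal (K : Type) [Field K] (N : AddSubmonoid ℕ) : Ideal ↥(grR K N) :=
  RingHom.ker ((psiHom K).toRingHom.comp ((grR K N).val.toRingHom))

lemma pIdeal_isPrime : (pIdeal K N).IsPrime := RingHom.ker_isPrime _

lemma mem_pIdeal_iff {f : ↥(grR K N)} :
    f ∈ pIdeal K N ↔ psiHom K (f : MvPolynomial (Fin 2) K) = 0 :=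
  RingHom.mem_ker

lemma constantCoeff_eq_eval_psi (q : MvPolynomial (Fin 2) K) :
    MvPolynomial.constantCoeff q = Polynomial.eval 0 (psiHom K q) := by
  have hext : (MvPolynomial.constantCoeff : MvPolynomial (Fin 2) K →+* K)
      = (Polynomial.evalRingHom 0).comp (psiHom K).toRingHom := by
    apply MvPolynomial.ringHom_ext
    · intro c
      simp [psiHom]
    · intro i
      fin_cases i <;> simp [psiHom]
  rw [hext]
  rfl

lemma pIdeal_le_mIdeal : pIdeal K N ≤ mIdeal K N := by
  intro f hf
  rw [mem_pIdeal_iff] at hf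
  rw [mem_mIdeal_iff, constantCoeff_eq_eval_psi, hf]
  simp

end RingLayer

section Elements
open MvPolynomial
variable {K : Type} [Field K] {N : AddSubmonoid ℕ} {F : ℕ}
variable (hF : F ∉ N) (hgt : ∀ k : ℕ, F < k → k ∈ N) (hone : (1:ℕ) ∉ N)

noncomputable def zel (hF : F ∉ N) (hgt : ∀ k : ℕ, F < k → k ∈ N) : ↥(grR K N) :=
  ⟨X 0 * (X 1) ^ (F + 1), z_mem K hF hgt⟩

noncomputable def uel (K : Type) [Field K] (N : AddSubmonoid ℕ) : ↥(grR K N) :=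
  ⟨X 0 * X 1, u_mem K⟩

noncomputable def tel (hgt : ∀ k : ℕ, F < k → k ∈ N) : ↥(grR K N) :=
  ⟨(X 0 : MvPolynomial (Fin 2) K) ^ (F + 1), tpow_mem K hgt⟩

lemma XY_ne_zero : (X 0 : MvPolynomial (Fin 2) K) * X 1 ≠ 0 :=
  mul_ne_zero (MvPolynomial.X_ne_zero 0) (MvPolynomial.X_ne_zero 1)

lemma uel_ne_zero : uel K N ≠ 0 := by
  intro h
  exact XY_ne_zero (congrArg Subtype.val h)

lemma zel_ne_zero : zel (K := K) hF hgt ≠ 0 := by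
  intro h
  exact mul_ne_zero (MvPolynomial.X_ne_zero 0)
    (pow_ne_zero _ (MvPolynomial.X_ne_zero 1)) (congrArg Subtype.val h)

lemma uel_mem_mIdeal : uel K N ∈ mIdeal K N := by
  rw [mem_mIdeal_iff]
  simp [uel]

lemma zel_mem_pIdeal : zel (K := K) hF hgt ∈ pIdeal K N := by
  rw [mem_pIdeal_iff]
  simp [zel, psiHom, zero_pow (Nat.succ_ne_zero F)]

lemma tel_mem_mIdeal : tel (K := K) hgt ∈ mIdeal K N := by
  rw [mem_mIdeal_iff]
  simp [tel, zero_pow (Nat.succ_ne_zero F)]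

lemma tel_not_mem_pIdeal : tel (K := K) hgt ∉ pIdeal K N := by
  rw [mem_pIdeal_iff]
  simp only [tel, psiHom, map_pow, MvPolynomial.aeval_X]
  intro h
  have : (Polynomial.X : Polynomial K) ^ (F+1) ≠ 0 := pow_ne_zero _ Polynomial.X_ne_zero
  simp only [Matrix.cons_val_zero] at h
  exact this h

include hF hgt hone in
lemma key_mul (f : ↥(grR K N)) (hf : f ∈ mIdeal K N) :
    ∃ r : ↥(grR K N), f * zel (K := K) hF hgt = uel K N * r := by
  rw [mem_mIdeal_iff] at hf
  have hmem : (f : MvPolynomial (Fin 2) K) * (X 1) ^ F ∈ grR K N :=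
    mul_X1F_mem K hF hgt hone f.2 hf
  refine ⟨⟨(f : MvPolynomial (Fin 2) K) * (X 1) ^ F, hmem⟩, ?_⟩
  apply Subtype.ext
  show (f : MvPolynomial (Fin 2) K) * (X 0 * (X 1) ^ (F+1))
      = (X 0 * X 1) * ((f : MvPolynomial (Fin 2) K) * (X 1) ^ F)
  ring

include hF hgt in
lemma key_nondiv (s r : ↥(grR K N))
    (hs : MvPolynomial.constantCoeff (s : MvPolynomial (Fin 2) K) ≠ 0) :
    zel (K := K) hF hgt * s ≠ uel K N * r := by
  intro h
  have hv : (X 0 * (X 1) ^ (F+1)) * (s : MvPolynomial (Fin 2) K)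
      = (X 0 * X 1) * (r : MvPolynomial (Fin 2) K) := congrArg Subtype.val h
  have hXY : (X 0 : MvPolynomial (Fin 2) K) * X 1 ≠ 0 := XY_ne_zero
  have hr : (r : MvPolynomial (Fin 2) K) = (X 1) ^ F * (s : MvPolynomial (Fin 2) K) := by
    apply mul_left_cancel₀ hXY
    rw [← hv]
    ring
  have hcoeff : MvPolynomial.coeff (Finsupp.single 1 F) (r : MvPolynomial (Fin 2) K)
      = MvPolynomial.constantCoeff (s : MvPolynomial (Fin 2) K) := by
    rw [hr, X_pow_eq_monomial]
    have := MvPolynomial.coeff_monomial_mul 0 (Finsupp.single 1 F) (1 : K)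
      (s : MvPolynomial (Fin 2) K)
    rw [add_zero] at this
    rw [this, one_mul]
    rfl
  have := coeff_single1F_zero K hF hgt r.2
  rw [hcoeff] at this
  exact hs this

end Elements

section LocalLayer
open MvPolynomial
variable {K : Type} [Field K] {N : AddSubmonoid ℕ} {F : ℕ}

instance mIdeal_isPrime_inst : (mIdeal K N).IsPrime := (mIdeal_isMaximal).isPrime

variable (hF : F ∉ N) (hgt : ∀ k : ℕ, F < k → k ∈ N) (hone : (1:ℕ) ∉ N)

local notation "Rm" => Localization.AtPrime (mIdeal K N)

lemma algMap_inj :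
    Function.Injective (algebraMap ↥(grR K N) Rm) :=
  IsLocalization.injective Rm (mIdeal K N).primeCompl_le_nonZeroDivisors

include hF hgt hone in
lemma stepA (q : Rm) (hq : q ∈ IsLocalRing.maximalIdeal Rm) :
    ∃ c : Rm, q * algebraMap ↥(grR K N) Rm (zel (K := K) hF hgt)
      = algebraMap ↥(grR K N) Rm (uel K N) * c := by
  obtain ⟨⟨f, s⟩, hfs⟩ := IsLocalization.surj (mIdeal K N).primeCompl q
  have hfm : f ∈ mIdeal K N := by
    have : algebraMap ↥(grR K N) Rm f ∈ IsLocalRing.maximalIdeal Rm := by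
      rw [← hfs]
      exact Ideal.mul_mem_right _ _ hq
    exact (IsLocalization.AtPrime.to_map_mem_maximal_iff Rm (mIdeal K N) f).mp this
  obtain ⟨r, hr⟩ := key_mul hF hgt hone f hfm
  have su : IsUnit (algebraMap ↥(grR K N) Rm s.1) := IsLocalization.map_units Rm s
  obtain ⟨sunit, hsu⟩ := su
  refine ⟨algebraMap ↥(grR K N) Rm r * ↑sunit⁻¹, ?_⟩
  have heq : (q * algebraMap ↥(grR K N) Rm (zel (K := K) hF hgt)) * ↑sunit
      = algebraMap ↥(grR K N) Rm (uel K N) * algebraMap ↥(grR K N) Rm r := by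
    rw [hsu]
    calc q * algebraMap ↥(grR K N) Rm (zel (K := K) hF hgt)
          * algebraMap ↥(grR K N) Rm s.1
        = (q * algebraMap ↥(grR K N) Rm s.1)
          * algebraMap ↥(grR K N) Rm (zel (K := K) hF hgt) := by ring
      _ = algebraMap ↥(grR K N) Rm f
          * algebraMap ↥(grR K N) Rm (zel (K := K) hF hgt) := by rw [hfs]
      _ = algebraMap ↥(grR K N) Rm (f * zel (K := K) hF hgt) := by rw [map_mul]
      _ = algebraMap ↥(grR K N) Rm (uel K N * r) := by rw [hr]
      _ = _ := by rw [map_mul]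
  rw [← mul_assoc]
  exact (Units.eq_mul_inv_iff_mul_eq sunit).mpr heq

include hF hgt hone in
lemma no_two_regular (x y : Rm)
    (hxm : x ∈ IsLocalRing.maximalIdeal Rm) (hym : y ∈ IsLocalRing.maximalIdeal Rm)
    (hx : IsSMulRegular Rm x)
    (hy : ∀ r : Rm, y * r ∈ Ideal.span {x} → r ∈ Ideal.span {x}) : False := by
  set z1 := algebraMap ↥(grR K N) Rm (zel (K := K) hF hgt) with hz1
  set u1 := algebraMap ↥(grR K N) Rm (uel K N) with hu1
  have u1ne : u1 ≠ 0 := by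
    rw [hu1]
    intro h
    exact uel_ne_zero (algMap_inj (h.trans (map_zero _).symm))
  obtain ⟨c1, hc1⟩ := stepA hF hgt hone x hxm
  obtain ⟨c2, hc2⟩ := stepA hF hgt hone y hym
  have hswap : u1 * (y * c1) = u1 * (x * c2) := by
    have h1 : y * (x * z1) = x * (y * z1) := by ring
    rw [hc1, hc2] at h1
    calc u1 * (y * c1) = y * (u1 * c1) := by ring
      _ = x * (u1 * c2) := h1
      _ = u1 * (x * c2) := by ring
  have hyx : y * c1 = x * c2 := mul_left_cancel₀ u1ne hswap
  have hc1span : c1 ∈ Ideal.span {x} := by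
    apply hy
    rw [hyx]
    exact Ideal.mem_span_singleton.mpr (Dvd.intro _ rfl)
  obtain ⟨c1', hc1'⟩ := Ideal.mem_span_singleton.mp hc1span
  have hz1u : z1 = u1 * c1' := by
    apply hx
    show x • z1 = x • (u1 * c1')
    simp only [smul_eq_mul]
    rw [hc1, hc1']
    ring
  -- now pull back to grR
  obtain ⟨⟨r, s⟩, hrs⟩ := IsLocalization.surj (mIdeal K N).primeCompl c1'
  have hfinal : algebraMap ↥(grR K N) Rm (zel (K := K) hF hgt * s.1)
      = algebraMap ↥(grR K N) Rm (uel K N * r) := by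
    rw [map_mul, map_mul, ← hz1, ← hu1]
    calc z1 * algebraMap ↥(grR K N) Rm s.1
        = u1 * (c1' * algebraMap ↥(grR K N) Rm s.1) := by rw [hz1u]; ring
      _ = u1 * algebraMap ↥(grR K N) Rm r := by rw [hrs]
  have heq : zel (K := K) hF hgt * s.1 = uel K N * r := algMap_inj hfinal
  have hs : MvPolynomial.constantCoeff (s.1 : MvPolynomial (Fin 2) K) ≠ 0 := by
    have := s.2
    intro h0
    exact this (mem_mIdeal_iff.mpr h0)
  exact key_nondiv hF hgt s.1 r hs heq

end LocalLayer

section Depth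
open Pointwise
variable {K : Type} [Field K] {N : AddSubmonoid ℕ} {F : ℕ}
variable (hF : F ∉ N) (hgt : ∀ k : ℕ, F < k → k ∈ N) (hone : (1:ℕ) ∉ N)

include hF hgt hone in
lemma depth_le_one :
    depthIn (Localization.AtPrime (mIdeal K N))
      (IsLocalRing.maximalIdeal (Localization.AtPrime (mIdeal K N))) ≤ 1 := by
  set Rm := Localization.AtPrime (mIdeal K N)
  apply sSup_le
  rintro m' ⟨rs, hmem, hreg, rfl⟩
  match rs, hmem, hreg with
  | [], _, _ => exact by simp
  | [x], _, _ => exact by simp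
  | x :: y :: rest, hmem, hreg => 
    exfalso
    have hw := hreg.toIsWeaklyRegular
    rw [RingTheory.Sequence.isWeaklyRegular_cons_iff] at hw
    obtain ⟨hxreg, hw2⟩ := hw
    rw [RingTheory.Sequence.isWeaklyRegular_cons_iff] at hw2
    obtain ⟨hyreg, -⟩ := hw2
    -- hyreg : IsSMulRegular (QuotSMulTop x Rm) y
    have hy : ∀ r : Rm, y * r ∈ Ideal.span {x} → r ∈ Ideal.span {x} := by
      intro r hr
      have hmk : (Submodule.Quotient.mk r : QuotSMulTop x Rm) = 0 := by
        apply hyreg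
        show y • (Submodule.Quotient.mk r : QuotSMulTop x Rm) = y • 0
        rw [smul_zero, ← Submodule.Quotient.mk_smul, Submodule.Quotient.mk_eq_zero]
        obtain ⟨c, hc⟩ := Ideal.mem_span_singleton.mp hr
        have : x • (c : Rm) = y • r := by
          rw [smul_eq_mul, smul_eq_mul, hc]
        rw [← this]
        exact Submodule.smul_mem_pointwise_smul c x ⊤ trivial
      rw [Submodule.Quotient.mk_eq_zero] at hmk
      obtain ⟨c, -, hc⟩ := Submodule.mem_map.mp hmk
      exact Ideal.mem_span_singleton.mpr ⟨c, by rw [← hc]; simp [smul_eq_mul, mul_comm]⟩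
    exact no_two_regular hF hgt hone x y (hmem x (by simp)) (hmem y (by simp)) hxreg hy

include hF hgt hone in
lemma dim_ge_two :
    (2 : WithBot ℕ∞) ≤ ringKrullDim (Localization.AtPrime (mIdeal K N)) := by
  classical
  set Rm := Localization.AtPrime (mIdeal K N) with hRm
  have hdisj : Disjoint ((mIdeal K N).primeCompl : Set ↥(grR K N)) ((pIdeal K N) : Set _) := by
    rw [Set.disjoint_left]
    intro a ha ha2
    exact ha (pIdeal_le_mIdeal ha2)
  have hQ2prime : (Ideal.map (algebraMap ↥(grR K N) Rm) (pIdeal K N)).IsPrime :=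
    IsLocalization.isPrime_of_isPrime_disjoint (mIdeal K N).primeCompl Rm
      (pIdeal K N) (pIdeal_isPrime) hdisj
  have hbotprime : (⊥ : Ideal Rm).IsPrime := Ideal.bot_prime
  have hmaxprime : (IsLocalRing.maximalIdeal Rm).IsPrime :=
    (IsLocalRing.maximalIdeal.isMaximal Rm).isPrime
  set Q2 := Ideal.map (algebraMap ↥(grR K N) Rm) (pIdeal K N) with hQ2
  have h01 : (⊥ : Ideal Rm) < Q2 := by
    rw [bot_lt_iff_ne_bot]
    intro hbot
    have hz : algebraMap ↥(grR K N) Rm (zel (K := K) hF hgt) ∈ Q2 :=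
      Ideal.mem_map_of_mem _ (zel_mem_pIdeal hF hgt)
    rw [hbot, Ideal.mem_bot] at hz
    exact zel_ne_zero hF hgt (algMap_inj (hz.trans (map_zero _).symm))
  have h12 : Q2 < IsLocalRing.maximalIdeal Rm := by
    have hle : Q2 ≤ IsLocalRing.maximalIdeal Rm := by
      rw [← Localization.AtPrime.map_eq_maximalIdeal]
      exact Ideal.map_mono pIdeal_le_mIdeal
    refine lt_of_le_of_ne hle ?_
    intro heq
    have htel : algebraMap ↥(grR K N) Rm (tel (K := K) hgt) ∈ Q2 := by
      rw [heq]
      exact (IsLocalization.AtPrime.to_map_mem_maximal_iff Rm (mIdeal K N) _).mpr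
        (tel_mem_mIdeal hgt)
    have : tel (K := K) hgt ∈ pIdeal K N := by
      have hcomap := IsLocalization.comap_map_of_isPrime_disjoint (mIdeal K N).primeCompl Rm
        (pIdeal_isPrime) hdisj
      rw [← hcomap]
      exact htel
    exact tel_not_mem_pIdeal hgt this
  -- build the chain in the prime spectrum
  set P0 : PrimeSpectrum Rm := ⟨⊥, hbotprime⟩
  set P1 : PrimeSpectrum Rm := ⟨Q2, hQ2prime⟩
  set P2 : PrimeSpectrum Rm := ⟨IsLocalRing.maximalIdeal Rm, hmaxprime⟩
  have hP01 : P0 < P1 := h01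
  have hP12 : P1 < P2 := h12
  have : ∃ lt : LTSeries (PrimeSpectrum Rm), lt.length = 2 := by
    refine ⟨⟨2, ![P0, P1, P2], ?_⟩, rfl⟩
    intro i
    fin_cases i <;> simpa using by assumption
  obtain ⟨lt, hlt⟩ := this
  have := Order.LTSeries.length_le_krullDim lt
  rw [hlt] at this
  exact_mod_cast this

end Depth

/-- If `ℕ \ N` is finite and nonempty (so `K[N]` is a 1-dimensional
non-normal toric algebra), then `R = gr D(K[N];K)` is not Cohen–Macaulay. -/
theorem grR_not_cohenMacaulay (K : Type) [Field K] [IsAlgClosed K] [CharZero K]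
    (N : AddSubmonoid ℕ) (hfin : {m : ℕ | m ∉ N}.Finite)
    (hne : ∃ m : ℕ, m ∉ N) :
    ¬ IsCohenMacaulayRing ↥(grR K N) := by
  intro hCM
  obtain ⟨m0, hm0⟩ := hne
  have hne' : hfin.toFinset.Nonempty := ⟨m0, hfin.mem_toFinset.mpr hm0⟩
  set F := hfin.toFinset.max' hne' with hFdef
  have hF : F ∉ N := by
    have := hfin.toFinset.max'_mem hne'
    rwa [Set.Finite.mem_toFinset] at this
  have hgt : ∀ k : ℕ, F < k → k ∈ N := by
    intro k hk
    by_contra hkN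
    have hmem : k ∈ hfin.toFinset := hfin.mem_toFinset.mpr hkN
    have := hfin.toFinset.le_max' k hmem
    omega
  have hone : (1:ℕ) ∉ N := by
    intro h1
    apply hF
    have : F • (1:ℕ) ∈ N := AddSubmonoid.nsmul_mem N h1 F
    simpa using this
  have hmax : (mIdeal K N).IsMaximal := mIdeal_isMaximal
  have heq := hCM (mIdeal K N) hmax
  have h1' := depth_le_one (K := K) hF hgt hone
  have h2' := dim_ge_two (K := K) hF hgt hone
  rw [← heq] at h2'
  have h3' : ((depthIn (Localization.AtPrime (mIdeal K N))
      (IsLocalRing.maximalIdeal (Localization.AtPrime (mIdeal K N)))) : WithBot ℕ∞)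
      ≤ ((1 : ℕ∞) : WithBot ℕ∞) := WithBot.coe_le_coe.mpr h1'
  have h4' : (2 : WithBot ℕ∞) ≤ ((1 : ℕ∞) : WithBot ℕ∞) := le_trans h2' h3'
  norm_num at h4'
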